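/- Let {κ_α : α < cf(𝔠)} be increasing and cofinal in 𝔠 = 2^{ℵ₀} and let {x_ξ : ξ < 𝔠} enumerate all infinite subsets of ω. For each α let S_α = {x_ξ : for all η < κ_α, x_η is not almost contained in x_ξ}. Then each S_α is a splitting family. -/

import Mathlib

open Set Cardinal

namespace Stmt8Aux

/-- code of the length-`n` initial segment of the branch `f`. -/
def seg (f : ℕ → Bool) (n : ℕ) : ℕ := Encodable.encode (List.ofFn fun i : Fin n => f i)

lemma seg_inj (f : ℕ → Bool) : Function.Injective (seg f) := by
  intro n m h
  have h2 := Encodable.encode_injective h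
  have h3 := congrArg List.length h2
  simpa using h3

/-- The branching almost disjoint family. -/
def A (f : ℕ → Bool) : Set ℕ := Set.range (seg f)

lemma A_infinite (f : ℕ → Bool) : (A f).Infinite :=
  Set.infinite_range_of_injective (seg_inj f)

lemma A_ad {f g : ℕ → Bool} (h : f ≠ g) : (A f ∩ A g).Finite := by
  have hex : ∃ n, f n ≠ g n := Function.ne_iff.mp h
  classical
  set k := Nat.find hex with hk
  have hks : f k ≠ g k := Nat.find_spec hex
  have hsub : A f ∩ A g ⊆ seg f '' Set.Iic k := by
    rintro c ⟨⟨n, rfl⟩, ⟨m, hm⟩⟩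
    have h2 : (List.ofFn fun i : Fin m => g i) = (List.ofFn fun i : Fin n => f i) :=
      Encodable.encode_injective hm
    have hnm : m = n := by
      have := congrArg List.length h2; simpa using this
    subst hnm
    have h3 : (fun i : Fin m => g i) = (fun i : Fin m => f i) := List.ofFn_injective h2
    have hle : m ≤ k := by
      by_contra hlt
      push_neg at hlt
      exact hks (congrFun h3 ⟨k, hlt⟩).symm
    exact ⟨m, hle, rfl⟩
  exact ((Set.finite_Iic k).image _).subset hsub

end Stmt8Aux

/-- Let `x` enumerate (bijectively) all infinite subsets of `ω` along the ordinals
below `𝔠`.  For each ordinal `μ < 𝔠`, the family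
`S_μ = {x ξ : ∀ η < μ, ¬ (x η ⊆* x ξ)}` is a splitting family. -/
theorem stmt8
    (x : {o : Ordinal.{0} // o < Cardinal.continuum.ord} → {s : Set ℕ // s.Infinite})
    (hx : Function.Bijective x)
    (μ : Ordinal.{0}) (hμ : μ < Cardinal.continuum.ord) :
    ∀ b : Set ℕ, b.Infinite →
      ∃ ξ : {o : Ordinal.{0} // o < Cardinal.continuum.ord},
        (∀ η : {o : Ordinal.{0} // o < Cardinal.continuum.ord},
          η.1 < μ → ¬ ((x η).1 \ (x ξ).1).Finite) ∧
        (b ∩ (x ξ).1).Infinite ∧ (b \ (x ξ).1).Infinite := by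
  intro b hb
  classical
  -- an embedding of `ℕ` into `b`
  set E := Set.Infinite.natEmbedding b hb with hE
  set G : ℕ → ℕ := fun n => (E n : ℕ) with hG
  have hGinj : Function.Injective G := fun a b h => by
    have := E.injective (Subtype.ext h); exact this
  have hGb : ∀ n, G n ∈ b := fun n => (E n).2
  have hG2 : Function.Injective (fun k => G (2 * k)) := fun a b h => by
    have := hGinj h; omega
  -- the transplanted almost disjoint family inside `b`
  set S : (ℕ → Bool) → Set ℕ := fun f => (fun k => G (2 * k)) '' Stmt8Aux.A f with hSdef
  have hSinf : ∀ f, (S f).Infinite := fun f =>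
    (Stmt8Aux.A_infinite f).image hG2.injOn
  have hSb : ∀ f, S f ⊆ b := by
    rintro f n ⟨k, _, rfl⟩; exact hGb _
  have hSad : ∀ {f g : ℕ → Bool}, f ≠ g → (S f ∩ S g).Finite := by
    intro f g h
    rw [hSdef]
    rw [← Set.image_inter hG2]
    exact (Stmt8Aux.A_ad h).image _
  have hbS : ∀ f, (b \ S f).Infinite := by
    intro f
    have hO : Set.range (fun n => G (2 * n + 1)) ⊆ b \ S f := by
      rintro m ⟨n, rfl⟩
      refine ⟨hGb _, ?_⟩
      rintro ⟨k, _, hk⟩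
      have := hGinj hk; omega
    refine Set.Infinite.mono hO (Set.infinite_range_of_injective ?_)
    intro a b h
    have := hGinj h; omega
  -- the set of bad branches is small
  set Bad : Set (ℕ → Bool) :=
    {f | ∃ η : {o : Ordinal.{0} // o < Cardinal.continuum.ord},
      η.1 < μ ∧ ((x η).1 \ S f).Finite} with hBad
  have hcard : #Bad < Cardinal.continuum := by
    have hemb : Bad ↪ Set.Iio μ := by
      refine ⟨fun f => ⟨(Classical.choose f.2).1, (Classical.choose_spec f.2).1⟩, ?_⟩
      intro f g hfg
      by_contra hne
      have hne' : (f : ℕ → Bool) ≠ (g : ℕ → Bool) := fun h => hne (Subtype.ext h)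
      obtain ⟨hfμ, hff⟩ := Classical.choose_spec f.2
      obtain ⟨hgμ, hgf⟩ := Classical.choose_spec g.2
      simp only [Subtype.mk.injEq] at hfg
      have hηeq : Classical.choose f.2 = Classical.choose g.2 := Subtype.ext (by have h := congrArg Subtype.val hfg; exact h)
      rw [hηeq] at hff
      set η := Classical.choose g.2
      have hsub : (x η).1 ⊆ ((x η).1 \ S f) ∪ ((x η).1 \ S g) ∪ (S f ∩ S g) := by
        intro n hn
        by_cases h1 : n ∈ S (f : ℕ → Bool)
        · by_cases h2 : n ∈ S (g : ℕ → Bool)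
          · exact Or.inr ⟨h1, h2⟩
          · exact Or.inl (Or.inr ⟨hn, h2⟩)
        · exact Or.inl (Or.inl ⟨hn, h1⟩)
      exact (x η).2 (((hff.union hgf).union (hSad hne')).subset hsub)
    have h1 : Cardinal.lift.{1} #Bad ≤ Cardinal.lift.{0} #(Set.Iio μ) :=
      Cardinal.lift_mk_le'.mpr ⟨hemb⟩
    rw [Cardinal.lift_id', Ordinal.mk_Iio_ordinal] at h1
    have h2 : #Bad ≤ μ.card := Cardinal.lift_le.mp h1
    exact lt_of_le_of_lt h2 (Cardinal.lt_ord.mp hμ)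
  have hgood : ∃ f, f ∉ Bad := by
    by_contra hall
    push_neg at hall
    have : Bad = Set.univ := Set.eq_univ_of_forall hall
    rw [this, Cardinal.mk_univ] at hcard
    have : #(ℕ → Bool) = Cardinal.continuum := by
      rw [← Cardinal.power_def, Cardinal.mk_bool, Cardinal.mk_nat,
        Cardinal.two_power_aleph0]
    rw [this] at hcard
    exact lt_irrefl _ hcard
  obtain ⟨f, hf⟩ := hgood
  obtain ⟨ξ, hξ⟩ := hx.2 ⟨S f, hSinf f⟩
  have hxξ : (x ξ).1 = S f := by rw [hξ]
  refine ⟨ξ, ?_, ?_, ?_⟩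
  · intro η hη hfin
    exact hf ⟨η, hη, by rwa [← hxξ]⟩
  · rw [hxξ]
    exact (hSinf f).mono (Set.subset_inter (hSb f) le_rfl)
  · rw [hxξ]; exact hbS f
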